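/- Let [n] = B ∪ N be a partition into nonempty disjoint sets, let y ∈ ℝⁿ with y > 0 entrywise, and let W ⊆ ℝⁿ be a linear subspace. Let y⁻¹W = {y⁻¹ w : w ∈ W} (entrywise product), and let σ_k = σ_k(ℓ_N^{y⁻¹W}) and σ̄_k = σ_k(ℓ_N^W) denote the k-th largest singular values of the lifting maps ℓ_N^{y⁻¹W} : ℝ^N → ℝ^B and ℓ_N^W : ℝ^N → ℝ^B. Then for all k ∈ [|N|]: σ_k / (‖y_B⁻¹‖_∞ · ‖y_N‖_∞) ≤ σ̄_k ≤ ‖y_B‖_∞ · ‖y_N⁻¹‖_∞ · σ_k, where y_B and y_N denote the restrictions of y to the coordinates in B and N, inverses are entrywise, and ‖·‖_∞ is the supremum norm. -/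

import Mathlib

open scoped RealInnerProductSpace

/-- The coordinate projection `π_I : ℝⁿ → ℝ^I` as a linear map. -/
noncomputable def coordRestrict {n : ℕ} (I : Finset (Fin n)) :
    EuclideanSpace ℝ (Fin n) →ₗ[ℝ] EuclideanSpace ℝ {i : Fin n // i ∈ I} where
  toFun x := WithLp.toLp 2 fun i => x i.1
  map_add' _ _ := rfl
  map_smul' _ _ := rfl

/-- Entrywise multiplication by the vector `a`, as a linear map `ℝⁿ → ℝⁿ`. -/
noncomputable def entrywiseMul {n : ℕ} (a : Fin n → ℝ) :
    EuclideanSpace ℝ (Fin n) →ₗ[ℝ] EuclideanSpace ℝ (Fin n) where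
  toFun x := WithLp.toLp 2 fun i => a i * x i
  map_add' x y := by ext i; simp [mul_add]
  map_smul' t x := by ext i; simp [mul_left_comm]

/-- `L` is the lifting map `L_I^W : ℝ^I → W`: for every `x`, `L x` is the minimum-norm
element of `{w ∈ W : w_I = Π_{π_I(W)}(x)}` (equivalently, of
`{w ∈ W : w_I - x ∈ (π_I(W))ᗮ}`). -/
def IsLiftingMap {n : ℕ} (I : Finset (Fin n)) (W : Submodule ℝ (EuclideanSpace ℝ (Fin n)))
    (L : EuclideanSpace ℝ {i : Fin n // i ∈ I} →ₗ[ℝ] EuclideanSpace ℝ (Fin n)) : Prop :=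
  ∀ x, (L x ∈ W ∧ coordRestrict I (L x) - x ∈ (W.map (coordRestrict I))ᗮ) ∧
    ∀ w ∈ W, coordRestrict I w - x ∈ (W.map (coordRestrict I))ᗮ → ‖L x‖ ≤ ‖w‖

/-- The `k`-th largest singular value of a linear map between finite-dimensional
normed spaces, via the Courant–Fischer characterization, with the convention that
it is `0` when `k` exceeds the dimension of the domain. -/
noncomputable def singularValue {E F : Type*} [NormedAddCommGroup E] [NormedAddCommGroup F]
    [Module ℝ E] [Module ℝ F] (M : E →ₗ[ℝ] F) (k : ℕ) : ℝ :=
  if k ≤ Module.finrank ℝ E then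
    sInf {t : ℝ | ∃ S : Submodule ℝ E,
      Module.finrank ℝ S = Module.finrank ℝ E - k + 1 ∧
      t = sSup {r : ℝ | ∃ u ∈ S, u ≠ 0 ∧ r = ‖M u‖ / ‖u‖}}
  else 0

/-! ### Auxiliary lemmas -/

open Module

section Aux

lemma aux_exists_le_finrank {E : Type*} [AddCommGroup E] [Module ℝ E] [FiniteDimensional ℝ E]
    (U : Submodule ℝ E) (m : ℕ) (hm : m ≤ finrank ℝ U) :
    ∃ S : Submodule ℝ E, S ≤ U ∧ finrank ℝ S = m := by
  obtain ⟨f, hf⟩ := exists_linearIndependent_of_le_finrank (R := ℝ) (M := U) hm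
  have hf2 : LinearIndependent ℝ (U.subtype ∘ f) :=
    hf.map' U.subtype (Submodule.ker_subtype U)
  refine ⟨Submodule.span ℝ (Set.range (U.subtype ∘ f)), ?_, ?_⟩
  · rw [Submodule.span_le]
    rintro x ⟨i, rfl⟩; exact (f i).2
  · rw [finrank_span_eq_card hf2, Fintype.card_fin]

lemma aux_norm_le {ι : Type*} [Fintype ι] (c : ℝ) (hc : 0 ≤ c) (u v : EuclideanSpace ℝ ι)
    (h : ∀ i, |u i| ≤ c * |v i|) : ‖u‖ ≤ c * ‖v‖ := by
  rw [EuclideanSpace.norm_eq, EuclideanSpace.norm_eq]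
  rw [← Real.sqrt_sq hc, ← Real.sqrt_mul (by positivity)]
  apply Real.sqrt_le_sqrt
  rw [Finset.mul_sum]
  apply Finset.sum_le_sum
  intro i _
  calc ‖u i‖ ^ 2 = |u i| ^ 2 := by rw [Real.norm_eq_abs]
    _ ≤ (c * |v i|) ^ 2 := by apply pow_le_pow_left₀ (abs_nonneg _) (h i)
    _ = c ^ 2 * ‖v i‖ ^ 2 := by rw [mul_pow, Real.norm_eq_abs]

lemma norm_sq_coord {n : ℕ} (u : EuclideanSpace ℝ (Fin n)) (I : Finset (Fin n)) :
    ‖coordRestrict I u‖ ^ 2 = ∑ i ∈ I, ‖u i‖ ^ 2 := by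
  rw [EuclideanSpace.norm_eq, Real.sq_sqrt (by positivity)]
  rw [← Finset.sum_coe_sort I (fun i => ‖u i‖ ^ 2)]
  rfl

lemma norm_sq_split {n : ℕ} (B N : Finset (Fin n)) (hBN : B ∪ N = Finset.univ)
    (hdisj : Disjoint B N) (u : EuclideanSpace ℝ (Fin n)) :
    ‖u‖ ^ 2 = ‖coordRestrict B u‖ ^ 2 + ‖coordRestrict N u‖ ^ 2 := by
  rw [EuclideanSpace.norm_eq, Real.sq_sqrt (by positivity), norm_sq_coord, norm_sq_coord,
    ← Finset.sum_union hdisj, hBN]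

variable {E F : Type*} [NormedAddCommGroup E] [NormedSpace ℝ E] [FiniteDimensional ℝ E]
  [NormedAddCommGroup F] [NormedSpace ℝ F]

def ratioSet (M : E →ₗ[ℝ] F) (S : Submodule ℝ E) : Set ℝ :=
  {r : ℝ | ∃ u ∈ S, u ≠ 0 ∧ r = ‖M u‖ / ‖u‖}

lemma ratio_bddAbove (M : E →ₗ[ℝ] F) (S : Submodule ℝ E) : BddAbove (ratioSet M S) := by
  refine ⟨‖LinearMap.toContinuousLinearMap M‖, ?_⟩
  rintro r ⟨u, -, hu, rfl⟩
  rw [div_le_iff₀ (norm_pos_iff.mpr hu)]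
  exact (LinearMap.toContinuousLinearMap M).le_opNorm u

omit [FiniteDimensional ℝ E] in
lemma ratio_nonneg (M : E →ₗ[ℝ] F) (S : Submodule ℝ E) {r : ℝ} (hr : r ∈ ratioSet M S) :
    0 ≤ r := by
  obtain ⟨u, -, hu, rfl⟩ := hr
  positivity

omit [FiniteDimensional ℝ E] in
lemma ratio_nonempty (M : E →ₗ[ℝ] F) {S : Submodule ℝ E} (hS : S ≠ ⊥) :
    (ratioSet M S).Nonempty := by
  obtain ⟨u, hu, hu0⟩ := Submodule.exists_mem_ne_zero_of_ne_bot hS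
  exact ⟨_, u, hu, hu0, rfl⟩

lemma sSup_ratio_nonneg (M : E →ₗ[ℝ] F) {S : Submodule ℝ E} (hS : S ≠ ⊥) :
    0 ≤ sSup (ratioSet M S) := by
  obtain ⟨r, hr⟩ := ratio_nonempty M hS
  exact le_trans (ratio_nonneg M S hr) (le_csSup (ratio_bddAbove M S) hr)

omit [FiniteDimensional ℝ E] in
lemma ne_bot_of_finrank_pos {S : Submodule ℝ E} {m : ℕ} (hm : 1 ≤ m)
    (h : finrank ℝ S = m) : S ≠ ⊥ := by
  intro hbot
  rw [hbot, finrank_bot] at h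
  omega

lemma aux_le_of_sq_le_sq {A C : ℝ} (hA : 0 ≤ A) (hC : 0 ≤ C) (h : A ^ 2 ≤ C ^ 2) : A ≤ C := by
  nlinarith

end Aux

/-- Entrywise multiplication on the coordinate-restricted space. -/
noncomputable def emulS {n : ℕ} (I : Finset (Fin n)) (a : Fin n → ℝ) :
    EuclideanSpace ℝ {i : Fin n // i ∈ I} →ₗ[ℝ] EuclideanSpace ℝ {i : Fin n // i ∈ I} where
  toFun x := WithLp.toLp 2 fun i => a i.1 * x i
  map_add' x y := by ext i; simp [mul_add]
  map_smul' t x := by ext i; simp [mul_left_comm]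

lemma emulS_inj {n : ℕ} (I : Finset (Fin n)) (a : Fin n → ℝ) (ha : ∀ i, a i ≠ 0) :
    Function.Injective (emulS I a) := by
  intro u v h
  ext i
  have := congrArg (fun w : EuclideanSpace ℝ {i : Fin n // i ∈ I} => w i) h
  exact mul_left_cancel₀ (ha i.1) this

section Lift

variable {n : ℕ} {I : Finset (Fin n)} {V : Submodule ℝ (EuclideanSpace ℝ (Fin n))}
  {L : EuclideanSpace ℝ {i : Fin n // i ∈ I} →ₗ[ℝ] EuclideanSpace ℝ (Fin n)}

lemma lift_coord (hL : IsLiftingMap I V L) {x : EuclideanSpace ℝ {i : Fin n // i ∈ I}}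
    (hx : x ∈ V.map (coordRestrict I)) : coordRestrict I (L x) = x := by
  have h1 : coordRestrict I (L x) ∈ V.map (coordRestrict I) :=
    Submodule.mem_map_of_mem (hL x).1.1
  have h2 : coordRestrict I (L x) - x ∈ (V.map (coordRestrict I))ᗮ := (hL x).1.2
  have h3 : coordRestrict I (L x) - x ∈ V.map (coordRestrict I) := sub_mem h1 hx
  have h4 : coordRestrict I (L x) - x = 0 := by
    have := (Submodule.orthogonal_disjoint (V.map (coordRestrict I)))
    exact (Submodule.disjoint_def.mp this) _ h3 h2
  rwa [sub_eq_zero] at h4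

lemma lift_orth_zero (hL : IsLiftingMap I V L) {s : EuclideanSpace ℝ {i : Fin n // i ∈ I}}
    (hs : s ∈ (V.map (coordRestrict I))ᗮ) : L s = 0 := by
  have h := (hL s).2 0 (zero_mem V) (by rw [map_zero, zero_sub]; exact neg_mem hs)
  rw [norm_zero] at h
  exact norm_le_zero_iff.mp h

end Lift

set_option maxHeartbeats 2000000 in
/-- The main one-sided inequality. -/
lemma main_ineq {n : ℕ} (B N : Finset (Fin n)) (hBN : B ∪ N = Finset.univ)
    (hdisj : Disjoint B N) (hB : B.Nonempty) (hN : N.Nonempty)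
    (V : Submodule ℝ (EuclideanSpace ℝ (Fin n)))
    (y : Fin n → ℝ) (hy : ∀ i, y i ≠ 0)
    (L Lbar : EuclideanSpace ℝ {i : Fin n // i ∈ N} →ₗ[ℝ] EuclideanSpace ℝ (Fin n))
    (hL : IsLiftingMap N V L)
    (hLbar : IsLiftingMap N (V.map (entrywiseMul y)) Lbar)
    (k : ℕ) (hk1 : 1 ≤ k) (hk2 : k ≤ N.card) :
    singularValue ((coordRestrict B).comp Lbar) k ≤
      (B.sup' hB fun i => |y i|) * (N.sup' hN fun i => |(y i)⁻¹|) *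
        singularValue ((coordRestrict B).comp L) k := by
  classical
  have hq : finrank ℝ (EuclideanSpace ℝ {i : Fin n // i ∈ N}) = N.card := by
    rw [finrank_euclideanSpace, Fintype.card_coe]
  obtain ⟨i₀, hi₀⟩ := id hB
  obtain ⟨j₀, hj₀⟩ := id hN
  set a := B.sup' hB fun i => |y i| with hadef
  set b := N.sup' hN fun i => |(y i)⁻¹| with hbdef
  have ha : 0 < a := lt_of_lt_of_le (abs_pos.mpr (hy i₀))
    (Finset.le_sup' (fun i => |y i|) hi₀)
  have hb : 0 < b := lt_of_lt_of_le (abs_pos.mpr (inv_ne_zero (hy j₀)))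
    (Finset.le_sup' (fun i => |(y i)⁻¹|) hj₀)
  have hab : 0 < a * b := mul_pos ha hb
  set M := (coordRestrict B).comp L with hM
  set Mb := (coordRestrict B).comp Lbar with hMb
  set m := N.card - k + 1 with hm
  have hm1 : 1 ≤ m := by omega
  have hmq : m ≤ finrank ℝ (EuclideanSpace ℝ {i : Fin n // i ∈ N}) := by omega
  set P := V.map (coordRestrict N) with hP
  set Wm := V.map (entrywiseMul y) with hWm
  set PW := Wm.map (coordRestrict N) with hPWdef
  set DN := emulS N y with hDN
  have hDNinj : Function.Injective DN := emulS_inj N y hy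
  have hcomm : (coordRestrict N).comp (entrywiseMul y) = DN.comp (coordRestrict N) := rfl
  have hPW : PW = P.map DN := by
    rw [hPWdef, hWm, hP, ← Submodule.map_comp, hcomm, Submodule.map_comp]
  set T : Set ℝ := {t : ℝ | ∃ S : Submodule ℝ (EuclideanSpace ℝ {i : Fin n // i ∈ N}), finrank ℝ S = m ∧ t = sSup (ratioSet M S)}
    with hT
  set Tb : Set ℝ := {t : ℝ | ∃ S : Submodule ℝ (EuclideanSpace ℝ {i : Fin n // i ∈ N}), finrank ℝ S = m ∧ t = sSup (ratioSet Mb S)}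
    with hTb
  have hTne : T.Nonempty := by
    obtain ⟨S₀, _, hS₀⟩ := aux_exists_le_finrank (⊤ : Submodule ℝ (EuclideanSpace ℝ {i : Fin n // i ∈ N})) m
      (by rw [finrank_top]; exact hmq)
    exact ⟨_, S₀, hS₀, rfl⟩
  have hTbbdd : BddBelow Tb := by
    refine ⟨0, ?_⟩
    rintro t ⟨S, hS, rfl⟩
    exact sSup_ratio_nonneg Mb (ne_bot_of_finrank_pos hm1 hS)
  have key : ∀ t ∈ T, sInf Tb ≤ a * b * t := by
    rintro t ⟨S, hSrank, htdef⟩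
    have ht0 : 0 ≤ t := htdef ▸ sSup_ratio_nonneg M (ne_bot_of_finrank_pos hm1 hSrank)
    -- dimension bookkeeping
    have hArank : finrank ℝ ((S ⊓ P).map DN : Submodule ℝ (EuclideanSpace ℝ {i : Fin n // i ∈ N})) = finrank ℝ (S ⊓ P : Submodule ℝ (EuclideanSpace ℝ {i : Fin n // i ∈ N})) :=
      (Submodule.equivMapOfInjective DN hDNinj (S ⊓ P)).finrank_eq.symm
    have hPWrank : finrank ℝ PW = finrank ℝ P := by
      rw [hPW]
      exact (Submodule.equivMapOfInjective DN hDNinj P).finrank_eq.symm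
    have hSP : finrank ℝ S + finrank ℝ P ≤ finrank ℝ (EuclideanSpace ℝ {i : Fin n // i ∈ N}) + finrank ℝ (S ⊓ P : Submodule ℝ (EuclideanSpace ℝ {i : Fin n // i ∈ N})) := by
      have h1 := Submodule.finrank_sup_add_finrank_inf_eq S P
      have h2 := Submodule.finrank_le (S ⊔ P)
      omega
    have hALE : (S ⊓ P).map DN ≤ PW := by
      rw [hPW]
      exact Submodule.map_mono inf_le_right
    have hUrank : finrank ℝ ((S ⊓ P).map DN ⊔ PWᗮ : Submodule ℝ (EuclideanSpace ℝ {i : Fin n // i ∈ N})) = finrank ℝ ((S ⊓ P).map DN : Submodule ℝ (EuclideanSpace ℝ {i : Fin n // i ∈ N})) + finrank ℝ (PWᗮ : Submodule ℝ (EuclideanSpace ℝ {i : Fin n // i ∈ N})) := by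
      have h1 := Submodule.finrank_sup_add_finrank_inf_eq ((S ⊓ P).map DN) PWᗮ
      have h2 : (S ⊓ P).map DN ⊓ PWᗮ = ⊥ :=
        ((Submodule.orthogonal_disjoint PW).mono_left hALE).eq_bot
      rw [h2, finrank_bot] at h1
      omega
    have hPWo : finrank ℝ PW + finrank ℝ (PWᗮ : Submodule ℝ (EuclideanSpace ℝ {i : Fin n // i ∈ N})) = finrank ℝ (EuclideanSpace ℝ {i : Fin n // i ∈ N}) :=
      Submodule.finrank_add_finrank_orthogonal PW
    have hmU : m ≤ finrank ℝ ((S ⊓ P).map DN ⊔ PWᗮ : Submodule ℝ (EuclideanSpace ℝ {i : Fin n // i ∈ N})) := by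
      rw [hUrank, hArank]
      omega
    obtain ⟨S', hS'le, hS'rank⟩ := aux_exists_le_finrank ((S ⊓ P).map DN ⊔ PWᗮ) m hmU
    have hstep1 : sInf Tb ≤ sSup (ratioSet Mb S') := csInf_le hTbbdd ⟨S', hS'rank, rfl⟩
    refine le_trans hstep1 (Real.sSup_le ?_ (by positivity))
    rintro r ⟨u, huS', hu0, rfl⟩
    obtain ⟨z, hzA, s, hsO, hzs⟩ := Submodule.mem_sup.mp (hS'le huS')
    obtain ⟨x, hxSP, hzx⟩ := Submodule.mem_map.mp hzA
    have hxP : x ∈ P := hxSP.2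
    have hxS : x ∈ S := hxSP.1
    set v := L x with hv
    have hvV : v ∈ V := (hL x).1.1
    have hvN : coordRestrict N v = x := lift_coord hL hxP
    set w := entrywiseMul y v with hw
    have hwW : w ∈ Wm := Submodule.mem_map_of_mem hvV
    have hzw : coordRestrict N w = z := by
      have hcomm : coordRestrict N w = DN (coordRestrict N v) := rfl
      rw [hcomm, hvN, hzx]
    have hzPW : z ∈ PW := hzw ▸ Submodule.mem_map_of_mem hwW
    have hMbs : Mb s = 0 := by
      rw [hMb, LinearMap.comp_apply, lift_orth_zero hLbar hsO, map_zero]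
    have hMbu : Mb u = Mb z := by
      rw [← hzs, map_add, hMbs, add_zero]
    have hLbzc : coordRestrict N (Lbar z) = z := lift_coord hLbar hzPW
    have hLbz_le : ‖Lbar z‖ ≤ ‖w‖ :=
      (hLbar z).2 w hwW (by rw [hzw, sub_self]; exact zero_mem _)
    have e1 : ‖Lbar z‖ ^ 2 = ‖Mb z‖ ^ 2 + ‖z‖ ^ 2 := by
      have hc : Mb z = coordRestrict B (Lbar z) := by rw [hMb]; rfl
      rw [norm_sq_split B N hBN hdisj (Lbar z), hLbzc, hc]
    have e2 : ‖w‖ ^ 2 = ‖coordRestrict B w‖ ^ 2 + ‖z‖ ^ 2 := by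
      rw [norm_sq_split B N hBN hdisj w, hzw]
    have e3 : ‖coordRestrict B w‖ ≤ a * ‖M x‖ := by
      apply aux_norm_le a ha.le
      intro i
      have h1 : (coordRestrict B w) i = y i.1 * v i.1 := rfl
      have h2 : (M x) i = v i.1 := by rw [hM]; rfl
      have hsup : |y i.1| ≤ a := by
        rw [hadef]; exact Finset.le_sup' (fun j => |y j|) i.2
      rw [h1, h2, abs_mul]
      exact mul_le_mul_of_nonneg_right hsup (abs_nonneg _)
    have f3 : ‖Mb z‖ ≤ a * ‖M x‖ := by
      apply aux_le_of_sq_le_sq (norm_nonneg _) (by positivity)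
      have s1 : ‖Lbar z‖ ^ 2 ≤ ‖w‖ ^ 2 := pow_le_pow_left₀ (norm_nonneg _) hLbz_le 2
      have s2 : ‖coordRestrict B w‖ ^ 2 ≤ (a * ‖M x‖) ^ 2 :=
        pow_le_pow_left₀ (norm_nonneg _) e3 2
      linarith
    have f4 : ‖x‖ ≤ b * ‖z‖ := by
      apply aux_norm_le b hb.le
      intro i
      have h1 : z i = y i.1 * x i := by rw [← hzx]; rfl
      have h2 : x i = (y i.1)⁻¹ * z i := by
        rw [h1, inv_mul_cancel_left₀ (hy i.1)]
      rw [h2, abs_mul, abs_inv]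
      refine mul_le_mul_of_nonneg_right ?_ (abs_nonneg _)
      have hsup : |(y i.1)⁻¹| ≤ b := by
        rw [hbdef]; exact Finset.le_sup' (fun j => |(y j)⁻¹|) i.2
      rwa [abs_inv] at hsup
    have f5 : ‖z‖ ≤ ‖u‖ := by
      have hinner : ⟪z, s⟫ = 0 := Submodule.inner_right_of_mem_orthogonal hzPW hsO
      have hsq : ‖u‖ ^ 2 = ‖z‖ ^ 2 + ‖s‖ ^ 2 := by
        rw [← hzs, norm_add_sq_real, hinner]
        ring
      apply aux_le_of_sq_le_sq (norm_nonneg _) (norm_nonneg _)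
      have := sq_nonneg ‖s‖
      simp only [sq] at this ⊢
      nlinarith [hsq]
    by_cases hx0 : x = 0
    · have hz0 : z = 0 := by rw [← hzx, hx0, map_zero]
      rw [hMbu, hz0, map_zero, norm_zero, zero_div]
      positivity
    · have hz0 : z ≠ 0 := by
        intro h
        exact hx0 (hDNinj (by rw [hzx, h, map_zero]))
      have hxn : (0:ℝ) < ‖x‖ := norm_pos_iff.mpr hx0
      have hzn : (0:ℝ) < ‖z‖ := norm_pos_iff.mpr hz0
      have hratio : ‖M x‖ / ‖x‖ ≤ t :=
        htdef ▸ le_csSup (ratio_bddAbove M S) ⟨x, hxS, hx0, rfl⟩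
      rw [hMbu]
      calc ‖Mb z‖ / ‖u‖ ≤ (a * ‖M x‖) / (‖x‖ / b) := by
            apply div_le_div₀ (by positivity) f3 (by positivity)
            rw [div_le_iff₀ hb]
            calc ‖x‖ ≤ b * ‖z‖ := f4
              _ ≤ b * ‖u‖ := by nlinarith
              _ = ‖u‖ * b := mul_comm _ _
        _ = a * b * (‖M x‖ / ‖x‖) := by field_simp
        _ ≤ a * b * t := mul_le_mul_of_nonneg_left hratio hab.le
  -- conclude
  have hkq : k ≤ finrank ℝ (EuclideanSpace ℝ {i : Fin n // i ∈ N}) := by omega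
  simp only [singularValue]
  rw [if_pos hkq, if_pos hkq, hq]
  have hSetT : {t : ℝ | ∃ S : Submodule ℝ (EuclideanSpace ℝ {i : Fin n // i ∈ N}),
      finrank ℝ S = N.card - k + 1 ∧
      t = sSup {r : ℝ | ∃ u ∈ S, u ≠ 0 ∧ r = ‖M u‖ / ‖u‖}} = T := rfl
  have hSetTb : {t : ℝ | ∃ S : Submodule ℝ (EuclideanSpace ℝ {i : Fin n // i ∈ N}),
      finrank ℝ S = N.card - k + 1 ∧
      t = sSup {r : ℝ | ∃ u ∈ S, u ≠ 0 ∧ r = ‖Mb u‖ / ‖u‖}} = Tb := rfl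
  rw [hSetT, hSetTb]
  have h1 : sInf Tb / (a * b) ≤ sInf T := by
    apply le_csInf hTne
    intro t ht
    rw [div_le_iff₀ hab]
    rw [mul_comm]
    exact key t ht
  have h2 := (div_le_iff₀ hab).mp h1
  rwa [mul_comm] at h2

lemma map_emul_inv_cancel {n : ℕ} (y : Fin n → ℝ) (hy : ∀ i, y i ≠ 0)
    (W : Submodule ℝ (EuclideanSpace ℝ (Fin n))) :
    (W.map (entrywiseMul fun i => (y i)⁻¹)).map (entrywiseMul y) = W := by
  rw [← Submodule.map_comp]
  have h : (entrywiseMul y).comp (entrywiseMul fun i => (y i)⁻¹) =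
      (LinearMap.id : EuclideanSpace ℝ (Fin n) →ₗ[ℝ] EuclideanSpace ℝ (Fin n)) := by
    apply LinearMap.ext
    intro v
    ext i
    exact mul_inv_cancel_left₀ (hy i) (v i)
  rw [h, Submodule.map_id]

theorem statement17 (n : ℕ)
    (B N : Finset (Fin n)) (hBN : B ∪ N = Finset.univ) (hdisj : Disjoint B N)
    (hB : B.Nonempty) (hN : N.Nonempty)
    (W : Submodule ℝ (EuclideanSpace ℝ (Fin n)))
    (y : EuclideanSpace ℝ (Fin n)) (hy : ∀ i, 0 < y i)
    -- `L` is the lifting map `L_N^{y⁻¹W}` and `Lbar` is the lifting map `L_N^W`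
    (L Lbar : EuclideanSpace ℝ {i : Fin n // i ∈ N} →ₗ[ℝ] EuclideanSpace ℝ (Fin n))
    (hL : IsLiftingMap N (W.map (entrywiseMul fun i => (y i)⁻¹)) L)
    (hLbar : IsLiftingMap N W Lbar) :
    ∀ k : ℕ, 1 ≤ k → k ≤ N.card →
      singularValue ((coordRestrict B).comp L) k /
          ((B.sup' hB fun i => |(y i)⁻¹|) * (N.sup' hN fun i => |y i|)) ≤
        singularValue ((coordRestrict B).comp Lbar) k ∧
      singularValue ((coordRestrict B).comp Lbar) k ≤
        (B.sup' hB fun i => |y i|) * (N.sup' hN fun i => |(y i)⁻¹|) *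
          singularValue ((coordRestrict B).comp L) k := by
  intro k hk1 hk2
  have hy' : ∀ i, y i ≠ 0 := fun i => (hy i).ne'
  have hyinv : ∀ i, (y i)⁻¹ ≠ 0 := fun i => inv_ne_zero (hy' i)
  constructor
  · -- lower bound: apply main_ineq with roles swapped and y⁻¹
    have h := main_ineq B N hBN hdisj hB hN W (fun i => (y i)⁻¹) hyinv Lbar L hLbar hL
      k hk1 hk2
    have hNsup : (N.sup' hN fun i => |((y i)⁻¹)⁻¹|) = (N.sup' hN fun i => |y i|) := by
      apply Finset.sup'_congr hN rfl
      intro i _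
      rw [inv_inv]
    rw [hNsup] at h
    obtain ⟨i₀, hi₀⟩ := id hB
    obtain ⟨j₀, hj₀⟩ := id hN
    have ha : (0:ℝ) < B.sup' hB fun i => |(y i)⁻¹| :=
      lt_of_lt_of_le (abs_pos.mpr (hyinv i₀)) (Finset.le_sup' (fun j => |(y j)⁻¹|) hi₀)
    have hb : (0:ℝ) < N.sup' hN fun i => |y i| :=
      lt_of_lt_of_le (abs_pos.mpr (hy' j₀)) (Finset.le_sup' (fun j => |y j|) hj₀)
    rw [div_le_iff₀ (mul_pos ha hb)]
    rw [mul_comm]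
    exact h
  · -- upper bound
    have hLbar' : IsLiftingMap N
        ((W.map (entrywiseMul fun i => (y i)⁻¹)).map (entrywiseMul y)) Lbar := by
      rw [map_emul_inv_cancel y hy' W]
      exact hLbar
    exact main_ineq B N hBN hdisj hB hN (W.map (entrywiseMul fun i => (y i)⁻¹)) y hy'
      L Lbar hL hLbar' k hk1 hk2
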